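/- For every λ with 1/2 < λ < 1, the maximum of min(v_a(w), v_b(w)) over infinite words w ∈ {a,b}^ω equals 1/(2(1-λ)), and it is attained exactly at words w with v_a(w) = v_b(w). -/

import Mathlib

/-- Discounted count of `a`'s (`true`) in an infinite word. -/
noncomputable def vA (lam : ℝ) (w : ℕ → Bool) : ℝ :=
  ∑' i : ℕ, if w i then lam ^ i else 0

/-- Discounted count of `b`'s (`false`) in an infinite word. -/
noncomputable def vB (lam : ℝ) (w : ℕ → Bool) : ℝ :=
  ∑' i : ℕ, if w i then 0 else lam ^ i

theorem max_of_min_discounted (lam : ℝ) (hlam : 1/2 < lam) (hlam1 : lam < 1) :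
    IsGreatest {x : ℝ | ∃ w : ℕ → Bool, x = min (vA lam w) (vB lam w)}
      (1 / (2 * (1 - lam))) ∧
    ∀ w : ℕ → Bool,
      (min (vA lam w) (vB lam w) = 1 / (2 * (1 - lam)) ↔ vA lam w = vB lam w) := by
  have hl0 : (0:ℝ) < lam := by linarith
  have h1m : (0:ℝ) < 1 - lam := by linarith
  have hgeo : Summable (fun i : ℕ => lam ^ i) :=
    summable_geometric_of_lt_one hl0.le hlam1
  have hsA : ∀ w : ℕ → Bool, Summable (fun i => if w i then lam ^ i else (0:ℝ)) := by
    intro w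
    refine Summable.of_nonneg_of_le (fun i => ?_) (fun i => ?_) hgeo
    · split <;> positivity
    · split
      · exact le_rfl
      · positivity
  have hsB : ∀ w : ℕ → Bool, Summable (fun i => if w i then (0:ℝ) else lam ^ i) := by
    intro w
    refine Summable.of_nonneg_of_le (fun i => ?_) (fun i => ?_) hgeo
    · split <;> positivity
    · split
      · positivity
      · exact le_rfl
  have hadd : ∀ w : ℕ → Bool, vA lam w + vB lam w = (1 - lam)⁻¹ := by
    intro w
    rw [vA, vB, ← Summable.tsum_add (hsA w) (hsB w)]
    have : (fun i : ℕ => (if w i then lam ^ i else 0) + (if w i then 0 else lam ^ i))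
        = fun i : ℕ => lam ^ i := by
      funext i; split <;> ring
    rw [this, tsum_geometric_of_lt_one hl0.le hlam1]
  have hhalf : (1:ℝ) / (2 * (1 - lam)) = (1 - lam)⁻¹ / 2 := by
    field_simp
  -- existence of a balanced word
  have hexists : ∃ w : ℕ → Bool, vA lam w = vB lam w := by
    set f : ℕ → ℝ :=
      fun n => Nat.rec 0 (fun n fn => fn + (if fn ≤ 0 then lam ^ n else -lam ^ n)) n with hf
    have hstep : ∀ n, f (n+1) = f n + (if f n ≤ 0 then lam ^ n else -lam ^ n) := fun n => rfl
    set w : ℕ → Bool := fun n => decide (f n ≤ 0) with hw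
    have hf0 : f 0 = 0 := rfl
    have hbound : ∀ n, |f (n+1)| ≤ lam ^ n := by
      intro n
      induction n with
      | zero =>
        rw [hstep 0, hf0]
        simp
      | succ n ih =>
        rcases abs_le.mp ih with ⟨hL, hR⟩
        have hpow : (0:ℝ) < lam ^ (n+1) := pow_pos hl0 _
        have h2 : lam ^ n ≤ 2 * lam ^ (n+1) := by
          have : lam ^ (n+1) = lam * lam ^ n := by ring
          nlinarith [pow_pos hl0 n]
        rw [hstep (n+1)]
        split
        · rw [abs_le]; constructor <;> nlinarith
        · rw [abs_le]; constructor <;> nlinarith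
    set g : ℕ → ℝ := fun i => if w i then lam ^ i else -lam ^ i with hg
    have hpart : ∀ n, ∑ i ∈ Finset.range n, g i = f n := by
      intro n
      induction n with
      | zero => simp [hf0]
      | succ n ih =>
        rw [Finset.sum_range_succ, ih, hstep n]
        have : g n = if f n ≤ 0 then lam ^ n else -lam ^ n := by
          rw [hg, hw]
          by_cases h : f n ≤ 0 <;> simp [h]
        rw [this]
    have hgsum : Summable g := by
      apply Summable.of_norm
      refine Summable.of_nonneg_of_le (fun i => norm_nonneg _) (fun i => ?_) hgeo
      have : (0:ℝ) ≤ lam ^ i := by positivity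
      by_cases h : w i <;> simp [hg, h, Real.norm_eq_abs, abs_of_nonneg hl0.le, ← abs_pow, abs_of_nonneg this]
    have htendf : Filter.Tendsto f Filter.atTop (nhds 0) := by
      rw [← Filter.tendsto_add_atTop_iff_nat 1]
      refine squeeze_zero_norm (fun n => ?_)
        (tendsto_pow_atTop_nhds_zero_of_lt_one hl0.le hlam1)
      simpa [Real.norm_eq_abs] using hbound n
    have htsum : ∑' i, g i = 0 := by
      have h1 := hgsum.hasSum.tendsto_sum_nat
      have h2 : Filter.Tendsto (fun n => ∑ i ∈ Finset.range n, g i)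
          Filter.atTop (nhds 0) := by
        simpa only [hpart] using htendf
      exact tendsto_nhds_unique h1 h2
    refine ⟨w, ?_⟩
    have hdiff : vA lam w - vB lam w = ∑' i, g i := by
      rw [vA, vB, ← Summable.tsum_sub (hsA w) (hsB w)]
      refine tsum_congr fun i => ?_
      by_cases h : w i <;> simp [hg, h]
    have := hdiff.trans htsum
    linarith
  -- equality characterization
  have key : ∀ w : ℕ → Bool,
      (min (vA lam w) (vB lam w) = 1 / (2 * (1 - lam)) ↔ vA lam w = vB lam w) := by
    intro w
    have hS := hadd w
    constructor
    · intro h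
      rcases le_total (vA lam w) (vB lam w) with hle | hle
      · rw [min_eq_left hle, hhalf] at h; linarith
      · rw [min_eq_right hle, hhalf] at h; linarith
    · intro h
      rw [h, min_self, hhalf]
      linarith
  refine ⟨⟨?_, ?_⟩, key⟩
  · obtain ⟨w0, hw0⟩ := hexists
    exact ⟨w0, ((key w0).mpr hw0).symm⟩
  · rintro x ⟨w, rfl⟩
    have hS := hadd w
    rcases le_total (vA lam w) (vB lam w) with h | h
    · rw [min_eq_left h, hhalf]; linarith
    · rw [min_eq_right h, hhalf]; linarith
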